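/- For each k with 1 ≤ k ≤ n−1, the element b_k := (σ_{k−1} ⋯ σ_2 σ_1)^{−k} (σ_{n−1} ⋯ σ_{k+2} σ_{k+1})^{n−k} of B_n satisfies b_k = d · (r_k r_{k−1} ⋯ r_1)^{−1} = (r_k r_{k−1} ⋯ r_1)^{−1} · d. -/

import Mathlib

namespace Braid

/-- Braid relations on generators indexed by `Fin m`; the generator `i : Fin m` stands for the
Artin generator `σ_{i+1}` of the braid group on `m+1` strands: the relations are
`σ_i σ_j = σ_j σ_i` for `|i-j| ≥ 2` and `σ_i σ_{i+1} σ_i = σ_{i+1} σ_i σ_{i+1}`. -/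
def braidRels (m : ℕ) : Set (FreeGroup (Fin m)) :=
  {r | ∃ i j : Fin m, i.val + 2 ≤ j.val ∧
      r = .of i * .of j * (.of j * .of i)⁻¹} ∪
  {r | ∃ (i : Fin m) (hij : i.val + 1 < m),
      r = .of i * .of ⟨i.val + 1, hij⟩ * .of i *
        (.of ⟨i.val + 1, hij⟩ * .of i * .of ⟨i.val + 1, hij⟩)⁻¹}

/-- The Artin braid group `B_n` on `n` strands, presented with generators `σ_1, …, σ_{n-1}`
and the braid relations. -/
def BraidGroup (n : ℕ) : Type := PresentedGroup (braidRels (n - 1))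

instance (n : ℕ) : Group (BraidGroup n) := by unfold BraidGroup; infer_instance

/-- The Artin generator `σ_i` of `B_n`, for `1 ≤ i ≤ n-1` (junk value `1` otherwise). -/
def σ (n : ℕ) (i : ℕ) : BraidGroup n :=
  if h : 1 ≤ i ∧ i ≤ n - 1 then PresentedGroup.of ⟨i - 1, by omega⟩ else 1

/-- The ascending product `σ_a σ_{a+1} ⋯ σ_b` (empty product if `b < a`). -/
def up (n a b : ℕ) : BraidGroup n := ((List.range' a (b + 1 - a)).map (σ n)).prod

/-- The descending product `σ_a σ_{a-1} ⋯ σ_b` (empty product if `a < b`). -/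
def down (n a b : ℕ) : BraidGroup n :=
  ((List.range' b (a + 1 - b)).reverse.map (σ n)).prod

/-- The full twist `d = (σ_{n-1} ⋯ σ_2 σ_1)^n` of `B_n`. -/
def fullTwist (n : ℕ) : BraidGroup n := (down n (n - 1) 1) ^ n

/-- The flip `r_i = σ_{i-1} ⋯ σ_2 σ_1^2 σ_2 ⋯ σ_{n-2} σ_{n-1}^2 σ_{n-2} ⋯ σ_i` of `B_n`
(for `1 ≤ i ≤ n`), written as `(σ_{i-1} ⋯ σ_1) (σ_1 ⋯ σ_{n-1}) (σ_{n-1} ⋯ σ_i)`. -/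
def flip (n i : ℕ) : BraidGroup n :=
  down n (i - 1) 1 * up n 1 (n - 1) * down n (n - 1) i

/-- The descending product of flips `r_a r_{a-1} ⋯ r_b` (empty product if `a < b`). -/
def flipsDown (n a b : ℕ) : BraidGroup n :=
  ((List.range' b (a + 1 - b)).reverse.map (flip n)).prod

/-- The subgroup `R_n ⊆ B_n` generated by the full twist `d` and the flips `r_1, …, r_n`. -/
def R (n : ℕ) : Subgroup (BraidGroup n) :=
  Subgroup.closure ({fullTwist n} ∪ flip n '' Set.Icc 1 n)

/-- The subgroup `R_n' ⊆ B_n` generated by the flips `r_1, …, r_n`. -/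
def R' (n : ℕ) : Subgroup (BraidGroup n) :=
  Subgroup.closure (flip n '' Set.Icc 1 n)

private lemma swap_braid {n : ℕ} (a b c : Fin n) (hab : a ≠ b) (hbc : b ≠ c) (hac : a ≠ c) :
    Equiv.swap a b * Equiv.swap b c * Equiv.swap a b
      = Equiv.swap b c * Equiv.swap a b * Equiv.swap b c := by
  have h1 : Equiv.swap b a * Equiv.swap c b * Equiv.swap b a = Equiv.swap a c :=
    Equiv.swap_mul_swap_mul_swap (Ne.symm hbc) hac.symm
  have h2 : Equiv.swap b c * Equiv.swap a b * Equiv.swap b c = Equiv.swap c a :=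
    Equiv.swap_mul_swap_mul_swap hab hac
  rw [h2, Equiv.swap_comm a b, Equiv.swap_comm b c, h1, Equiv.swap_comm a c]

private lemma swap_commute {n : ℕ} (a b c d : Fin n)
    (hac : a ≠ c) (had : a ≠ d) (hbc : b ≠ c) (hbd : b ≠ d) :
    Equiv.swap a b * Equiv.swap c d = Equiv.swap c d * Equiv.swap a b := by
  refine Equiv.Perm.Disjoint.commute ?_
  intro x
  by_cases h1 : x = a
  · subst h1; right; exact Equiv.swap_apply_of_ne_of_ne hac had
  · by_cases h2 : x = b
    · subst h2; right; exact Equiv.swap_apply_of_ne_of_ne hbc hbd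
    · left; exact Equiv.swap_apply_of_ne_of_ne h1 h2

/-- The transposition `(i, i+1)` of `Fin n` associated to the generator `i : Fin (n-1)`. -/
def permGen (n : ℕ) (i : Fin (n - 1)) : Equiv.Perm (Fin n) :=
  Equiv.swap ⟨i.val, by have := i.isLt; omega⟩ ⟨i.val + 1, by have := i.isLt; omega⟩

/-- The homomorphism `B_n → Sym(n)` sending `σ_i` to the transposition `(i, i+1)`. -/
def toPerm (n : ℕ) : BraidGroup n →* Equiv.Perm (Fin n) :=
  PresentedGroup.toGroup (f := permGen n)
    (by
      rintro r (⟨i, j, hij, rfl⟩ | ⟨i, hij, rfl⟩) <;>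
        simp only [map_mul, map_inv, FreeGroup.lift_apply_of, permGen] <;> rw [mul_inv_eq_one]
      · refine swap_commute _ _ _ _ ?_ ?_ ?_ ?_ <;>
          · rw [ne_eq, Fin.mk.injEq]; omega
      · refine swap_braid _ _ _ ?_ ?_ ?_ <;>
          · rw [ne_eq, Fin.mk.injEq]; omega)

/-- The pure braid group `P_n`: the kernel of `B_n → Sym(n)`, `σ_i ↦ (i, i+1)`. -/
def P (n : ℕ) : Subgroup (BraidGroup n) := (toPerm n).ker

private lemma mk_rel_eq_one {m : ℕ} {r : FreeGroup (Fin m)} (h : r ∈ braidRels m) :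
    PresentedGroup.mk (braidRels m) r = 1 :=
  (QuotientGroup.eq_one_iff _).mpr (Subgroup.subset_normalClosure h)

lemma σ_comm {n i j : ℕ} (h1 : 1 ≤ i) (h2 : i + 2 ≤ j) (h3 : j ≤ n - 1) :
    σ n i * σ n j = σ n j * σ n i := by
  erw [σ, σ, dif_pos ⟨h1, by omega⟩, dif_pos ⟨by omega, h3⟩]
  have hmem : (FreeGroup.of (⟨i - 1, by omega⟩ : Fin (n-1)) * .of ⟨j - 1, by omega⟩ *
      (.of ⟨j - 1, by omega⟩ * .of ⟨i - 1, by omega⟩)⁻¹) ∈ braidRels (n - 1) :=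
    Or.inl ⟨⟨i - 1, by omega⟩, ⟨j - 1, by omega⟩, by show i - 1 + 2 ≤ j - 1; omega, rfl⟩
  have h := mk_rel_eq_one hmem
  rw [map_mul, map_inv, mul_inv_eq_one, map_mul, map_mul] at h
  exact h

set_option maxHeartbeats 1600000 in
lemma σ_braid {n i : ℕ} (h1 : 1 ≤ i) (h2 : i + 1 ≤ n - 1) :
    σ n i * σ n (i + 1) * σ n i = σ n (i + 1) * σ n i * σ n (i + 1) := by
  erw [σ, σ, dif_pos ⟨h1, by omega⟩, dif_pos ⟨by omega, h2⟩]
  have key : (⟨i + 1 - 1, by omega⟩ : Fin (n - 1)) = ⟨(i - 1) + 1, by omega⟩ := by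
    rw [Fin.mk.injEq]; omega
  rw [key]
  have hmem : (FreeGroup.of (⟨i - 1, by omega⟩ : Fin (n-1)) * .of ⟨(i-1) + 1, by omega⟩ *
      .of ⟨i - 1, by omega⟩ *
      (.of ⟨(i-1) + 1, by omega⟩ * .of ⟨i - 1, by omega⟩ * .of ⟨(i-1)+1, by omega⟩)⁻¹)
      ∈ braidRels (n - 1) :=
    Or.inr ⟨⟨i - 1, by omega⟩, by show i - 1 + 1 < n - 1; omega, rfl⟩
  have h := mk_rel_eq_one hmem
  rw [map_mul, map_inv, mul_inv_eq_one, map_mul, map_mul, map_mul, map_mul] at h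
  exact h

/-- The canonical homomorphism `ι : B_{n-1} → B_n` determined by `σ_i ↦ σ_i`. -/
def ι (n : ℕ) : BraidGroup (n - 1) →* BraidGroup n :=
  PresentedGroup.toGroup (f := fun i : Fin (n - 1 - 1) => σ n (i.val + 1))
    (by
      rintro r (⟨i, j, hij, rfl⟩ | ⟨i, hij, rfl⟩) <;>
        simp only [map_mul, map_inv, FreeGroup.lift_apply_of] <;> rw [mul_inv_eq_one]
      · exact σ_comm (by omega) (by omega) (by have := j.isLt; omega)
      · exact σ_braid (by omega) (by have := i.isLt; omega))


section Lemmas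

variable {n : ℕ}

lemma σ_eq_one {i : ℕ} (h : ¬(1 ≤ i ∧ i ≤ n - 1)) : σ n i = 1 := dif_neg h

lemma σ_comm_all {i j : ℕ} (h : i + 2 ≤ j) : Commute (σ n i) (σ n j) := by
  by_cases hi : 1 ≤ i ∧ i ≤ n - 1
  · by_cases hj : 1 ≤ j ∧ j ≤ n - 1
    · exact σ_comm hi.1 h hj.2
    · rw [σ_eq_one hj]; exact Commute.one_right _
  · rw [σ_eq_one hi]; exact Commute.one_left _

lemma down_eq_one {a b : ℕ} (h : b < a) : down n b a = 1 := by
  unfold down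
  have : b + 1 - a = 0 := by omega
  rw [this]; rfl

lemma down_single (a : ℕ) : down n a a = σ n a := by
  unfold down
  have : a + 1 - a = 1 := by omega
  rw [this]; simp

lemma up_eq_one {a b : ℕ} (h : b < a) : up n a b = 1 := by
  unfold up
  have : b + 1 - a = 0 := by omega
  rw [this]; rfl

lemma up_single (a : ℕ) : up n a a = σ n a := by
  unfold up
  have : a + 1 - a = 1 := by omega
  rw [this]; simp

lemma down_top {a b : ℕ} (ha : 1 ≤ a) (h : a ≤ b) : down n b a = σ n b * down n (b - 1) a := by
  unfold down
  have h1 : b + 1 - a = (b - a) + 1 := by omega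
  have h2 : b - 1 + 1 - a = b - a := by omega
  have h3 : a + (b - a) = b := by omega
  rw [h1, h2, List.range'_1_concat, List.reverse_append, h3]
  simp

lemma down_bot {a b : ℕ} (h : a ≤ b) : down n b a = down n b (a + 1) * σ n a := by
  unfold down
  have h1 : b + 1 - a = (b - a) + 1 := by omega
  have h2 : b + 1 - (a + 1) = b - a := by omega
  rw [h1, h2, List.range'_succ, List.reverse_cons]
  simp

lemma up_concat {a b : ℕ} (ha : 1 ≤ a) (h : a ≤ b) : up n a b = up n a (b - 1) * σ n b := by
  unfold up
  have h1 : b + 1 - a = (b - a) + 1 := by omega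
  have h2 : b - 1 + 1 - a = b - a := by omega
  have h3 : a + (b - a) = b := by omega
  rw [h1, h2, List.range'_1_concat, h3]
  simp

lemma up_cons {a b : ℕ} (h : a ≤ b) : up n a b = σ n a * up n (a + 1) b := by
  unfold up
  have h1 : b + 1 - a = (b - a) + 1 := by omega
  have h2 : b + 1 - (a + 1) = b - a := by omega
  rw [h1, h2, List.range'_succ]
  simp

lemma up_concat' {a b : ℕ} (ha : 1 ≤ a) (h : a ≤ b + 1) :
    up n a (b + 1) = up n a b * σ n (b + 1) := by
  rw [up_concat ha h]
  norm_num

lemma down_split {a b c : ℕ} (h1 : a ≤ c + 1) (h2 : c ≤ b) :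
    down n b a = down n b (c + 1) * down n c a := by
  unfold down
  have key : List.range' a (c + 1 - a) ++ List.range' (c + 1) (b + 1 - (c + 1))
      = List.range' a (b + 1 - a) := by
    have e2 : a + (c + 1 - a) = c + 1 := by omega
    have e1 : (c + 1 - a) + (b + 1 - (c + 1)) = b + 1 - a := by omega
    rw [← e1, ← List.range'_append_1, e2]
  rw [← key, List.reverse_append, List.map_append, List.prod_append]

lemma up_split {a b c : ℕ} (h1 : a ≤ c + 1) (h2 : c ≤ b) :
    up n a b = up n a c * up n (c + 1) b := by
  unfold up
  have key : List.range' a (c + 1 - a) ++ List.range' (c + 1) (b + 1 - (c + 1))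
      = List.range' a (b + 1 - a) := by
    have e2 : a + (c + 1 - a) = c + 1 := by omega
    have e1 : (c + 1 - a) + (b + 1 - (c + 1)) = b + 1 - a := by omega
    rw [← e1, ← List.range'_append_1, e2]
  rw [← key, List.map_append, List.prod_append]

lemma down_commute {x : BraidGroup n} {a b : ℕ} (ha : 1 ≤ a)
    (h : ∀ j, a ≤ j → j ≤ b → Commute x (σ n j)) : Commute x (down n b a) := by
  induction b using Nat.strong_induction_on with
  | _ b ih =>
    rcases lt_or_ge b a with hb | hb
    · rw [down_eq_one hb]; exact Commute.one_right _
    · rw [down_top ha hb]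
      exact ((h b hb le_rfl).mul_right
        (ih (b - 1) (by omega) (fun j hj1 hj2 => h j hj1 (by omega))))

lemma up_commute {x : BraidGroup n} {a b : ℕ} (ha : 1 ≤ a)
    (h : ∀ j, a ≤ j → j ≤ b → Commute x (σ n j)) : Commute x (up n a b) := by
  induction b using Nat.strong_induction_on with
  | _ b ih =>
    rcases lt_or_ge b a with hb | hb
    · rw [up_eq_one hb]; exact Commute.one_right _
    · rw [up_concat ha hb]
      exact ((ih (b - 1) (by omega) (fun j hj1 hj2 => h j hj1 (by omega))).mul_right
        (h b hb le_rfl))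

lemma shift_top {a b : ℕ} (ha : 1 ≤ a) (hab : a < b) (hb : b ≤ n - 1) :
    down n b a * σ n b = σ n (b - 1) * down n b a := by
  have e1 : down n b a = σ n b * (σ n (b - 1) * down n (b - 2) a) := by
    rw [down_top ha (by omega : a ≤ b), down_top ha (by omega : a ≤ b - 1)]
    have h22 : b - 1 - 1 = b - 2 := by omega
    rw [h22]
  have hcomm : Commute (σ n b) (down n (b - 2) a) :=
    down_commute ha (fun j hj1 hj2 => (σ_comm_all (by omega)).symm)
  have hbr : σ n (b - 1) * σ n b * σ n (b - 1) = σ n b * σ n (b - 1) * σ n b := by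
    have h := σ_braid (n := n) (i := b - 1) (by omega) (by omega)
    have e : b - 1 + 1 = b := by omega
    rw [e] at h
    exact h
  calc down n b a * σ n b
      = σ n b * σ n (b - 1) * (down n (b - 2) a * σ n b) := by rw [e1]; group
    _ = σ n b * σ n (b - 1) * (σ n b * down n (b - 2) a) := by rw [← hcomm.eq]
    _ = σ n b * σ n (b - 1) * σ n b * down n (b - 2) a := by group
    _ = σ n (b - 1) * σ n b * σ n (b - 1) * down n (b - 2) a := by rw [← hbr]
    _ = σ n (b - 1) * down n b a := by rw [e1]; group

lemma shift_down {a b i : ℕ} (ha : 1 ≤ a) (hi1 : a < i) (hi2 : i ≤ b) (hb : b ≤ n - 1) :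
    down n b a * σ n i = σ n (i - 1) * down n b a := by
  rcases eq_or_lt_of_le hi2 with rfl | hib
  · exact shift_top ha hi1 hb
  · have hsplit : down n b a = down n b (i + 1) * down n i a :=
      down_split (by omega) (by omega)
    have hcomm : Commute (σ n (i - 1)) (down n b (i + 1)) :=
      down_commute (by omega) (fun j hj1 hj2 => σ_comm_all (by omega))
    calc down n b a * σ n i
        = down n b (i + 1) * (down n i a * σ n i) := by rw [hsplit]; group
      _ = down n b (i + 1) * (σ n (i - 1) * down n i a) := by
          rw [shift_top ha hi1 (by omega)]
      _ = σ n (i - 1) * (down n b (i + 1) * down n i a) := by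
          rw [← mul_assoc, ← hcomm.eq, mul_assoc]
      _ = σ n (i - 1) * down n b a := by rw [← hsplit]

lemma shift_down' {a b j : ℕ} (ha : 1 ≤ a) (hj1 : a ≤ j) (hj2 : j + 1 ≤ b) (hb : b ≤ n - 1) :
    σ n j * down n b a = down n b a * σ n (j + 1) := by
  have h := shift_down (n := n) ha (by omega : a < j + 1) hj2 hb
  have e : j + 1 - 1 = j := by omega
  rw [e] at h
  exact h.symm

lemma up_shift_right {a b c d : ℕ} (ha : 1 ≤ a) (hb : b ≤ n - 1) (hc : a ≤ c) (hd : d < b) :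
    up n c d * down n b a = down n b a * up n (c + 1) (d + 1) := by
  induction d using Nat.strong_induction_on with
  | _ d ih =>
    rcases lt_or_ge d c with hdc | hdc
    · rw [up_eq_one hdc, up_eq_one (by omega)]; simp
    · have e : d - 1 + 1 = d := by omega
      calc up n c d * down n b a
          = up n c (d - 1) * (σ n d * down n b a) := by rw [up_concat (by omega) hdc]; group
        _ = up n c (d - 1) * (down n b a * σ n (d + 1)) := by
            rw [shift_down' ha (by omega) (by omega) hb]
        _ = (up n c (d - 1) * down n b a) * σ n (d + 1) := by group
        _ = down n b a * up n (c + 1) (d - 1 + 1) * σ n (d + 1) := by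
            rw [ih (d - 1) (by omega) (by omega)]
        _ = down n b a * up n (c + 1) (d + 1) := by
            rw [e, mul_assoc, ← up_concat' (by omega) (by omega : c + 1 ≤ d + 1)]

lemma down_shift_up {a b c d : ℕ} (ha : 1 ≤ a) (hb : b ≤ n - 1) (hc : a + 1 ≤ c) (hd : d ≤ b) :
    down n b a * up n c d = up n (c - 1) (d - 1) * down n b a := by
  induction d using Nat.strong_induction_on with
  | _ d ih =>
    rcases lt_or_ge d c with hdc | hdc
    · rw [up_eq_one hdc, up_eq_one (by omega)]; simp
    · calc down n b a * up n c d
          = (down n b a * up n c (d - 1)) * σ n d := by rw [up_concat (by omega) hdc]; group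
        _ = up n (c - 1) (d - 1 - 1) * (down n b a * σ n d) := by
            rw [ih (d - 1) (by omega) (by omega)]; group
        _ = up n (c - 1) (d - 1 - 1) * (σ n (d - 1) * down n b a) := by
            rw [shift_down ha (by omega) hd hb]
        _ = (up n (c - 1) (d - 1 - 1) * σ n (d - 1)) * down n b a := by group
        _ = up n (c - 1) (d - 1) * down n b a := by
            rw [← up_concat (by omega) (by omega : c - 1 ≤ d - 1)]

end Lemmas

section Lemmas2

variable {n : ℕ}

lemma powB {a b k : ℕ} (ha : 1 ≤ a) (hab : a ≤ b) (hb : b ≤ n - 1) (hk1 : 1 ≤ k)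
    (hk2 : k ≤ b - a + 1) :
    down n b a ^ k = down n b (a + 1) ^ k * up n a (a + k - 1) := by
  revert hk2
  induction k, hk1 using Nat.le_induction with
  | base =>
    intro _
    rw [pow_one, pow_one, show a + 1 - 1 = a from by omega, up_single, down_bot hab]
  | succ k hk ih =>
    intro hk2
    have hakb : a + k ≤ b := by omega
    have ih' := ih (by omega)
    have e2 : up n (a + 1) (a + k - 1) * down n b (a + 1)
        = down n b (a + 1) * up n (a + 2) (a + k) := by
      have h := up_shift_right (n := n) (a := a + 1) (b := b) (c := a + 1) (d := a + k - 1)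
        (by omega) hb le_rfl (by omega)
      rw [show a + 1 + 1 = a + 2 from rfl, show a + k - 1 + 1 = a + k from by omega] at h
      exact h
    have hca : Commute (σ n a) (up n (a + 2) (a + k)) :=
      up_commute (by omega) (fun j hj1 _ => σ_comm_all (by omega))
    have e3 : σ n a * down n b (a + 1) * σ n a = down n b (a + 1) * (σ n a * σ n (a + 1)) := by
      have hsplit : down n b (a + 1) = down n b (a + 2) * σ n (a + 1) := down_bot (by omega)
      have hc2 : Commute (σ n a) (down n b (a + 2)) :=
        down_commute (by omega) (fun j hj1 _ => σ_comm_all (by omega))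
      have hbr := σ_braid (n := n) (i := a) ha (by omega)
      calc σ n a * down n b (a + 1) * σ n a
          = (σ n a * down n b (a + 2)) * (σ n (a + 1) * σ n a) := by rw [hsplit]; group
        _ = (down n b (a + 2) * σ n a) * (σ n (a + 1) * σ n a) := by rw [hc2.eq]
        _ = down n b (a + 2) * (σ n a * σ n (a + 1) * σ n a) := by group
        _ = down n b (a + 2) * (σ n (a + 1) * (σ n a * σ n (a + 1))) := by rw [hbr]; group
        _ = down n b (a + 1) * (σ n a * σ n (a + 1)) := by rw [hsplit]; group
    have e5 : σ n a * (down n b (a + 1) * up n (a + 2) (a + k)) * σ n a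
        = down n b (a + 1) * (σ n a * σ n (a + 1) * up n (a + 2) (a + k)) := by
      calc σ n a * (down n b (a + 1) * up n (a + 2) (a + k)) * σ n a
          = (σ n a * down n b (a + 1)) * (up n (a + 2) (a + k) * σ n a) := by group
        _ = (σ n a * down n b (a + 1)) * (σ n a * up n (a + 2) (a + k)) := by rw [← hca.eq]
        _ = (σ n a * down n b (a + 1) * σ n a) * up n (a + 2) (a + k) := by group
        _ = (down n b (a + 1) * (σ n a * σ n (a + 1))) * up n (a + 2) (a + k) := by rw [e3]
        _ = down n b (a + 1) * (σ n a * σ n (a + 1) * up n (a + 2) (a + k)) := by group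
    have e6 : up n a (a + k) = σ n a * σ n (a + 1) * up n (a + 2) (a + k) := by
      rw [up_cons (show a ≤ a + k from by omega), up_cons (show a + 1 ≤ a + k from by omega)]
      group
    calc down n b a ^ (k + 1)
        = down n b a ^ k * down n b a := pow_succ _ _
      _ = (down n b (a + 1) ^ k * up n a (a + k - 1)) * (down n b (a + 1) * σ n a) := by
          rw [ih', down_bot hab]
      _ = down n b (a + 1) ^ k * ((σ n a * up n (a + 1) (a + k - 1)) * (down n b (a + 1) * σ n a)) := by
          rw [up_cons (show a ≤ a + k - 1 from by omega)]; group
      _ = down n b (a + 1) ^ k * (σ n a * (up n (a + 1) (a + k - 1) * down n b (a + 1)) * σ n a) := by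
          group
      _ = down n b (a + 1) ^ k * (σ n a * (down n b (a + 1) * up n (a + 2) (a + k)) * σ n a) := by
          rw [e2]
      _ = down n b (a + 1) ^ k * (down n b (a + 1) * (σ n a * σ n (a + 1) * up n (a + 2) (a + k))) := by
          rw [e5]
      _ = (down n b (a + 1) ^ k * down n b (a + 1)) * up n a (a + k) := by rw [e6]; group
      _ = down n b (a + 1) ^ (k + 1) * up n a (a + (k + 1) - 1) := by
          rw [← pow_succ, show a + (k + 1) - 1 = a + k from by omega]

lemma powC {a b k : ℕ} (ha : 1 ≤ a) (hab : a ≤ b) (hb : b ≤ n - 1) (hk1 : 1 ≤ k)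
    (hk2 : k ≤ b - a + 1) :
    down n b a ^ k = up n (b - k + 1) b * down n (b - 1) a ^ k := by
  revert hk2
  induction k, hk1 using Nat.le_induction with
  | base =>
    intro _
    rw [pow_one, pow_one, show b - 1 + 1 = b from by omega, up_single, ← down_top ha hab]
  | succ k hk ih =>
    intro hk2
    have hakb : a + k ≤ b := by omega
    have ih' := ih (by omega)
    have hsplit2 : down n (b - 1) a = σ n (b - 1) * down n (b - 2) a := by
      rw [down_top ha (by omega), show b - 1 - 1 = b - 2 from by omega]
    have e1 : down n (b - 1) a * up n (b - k + 1) b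
        = up n (b - k) (b - 2) * (σ n (b - 1) * σ n b * down n (b - 2) a) := by
      have s1 : up n (b - k + 1) b = up n (b - k + 1) (b - 1) * σ n b := by
        have h := up_concat (n := n) (a := b - k + 1) (b := b) (by omega) (by omega)
        exact h
      have s2 : down n (b - 1) a * up n (b - k + 1) (b - 1)
          = up n (b - k) (b - 2) * down n (b - 1) a := by
        have h := down_shift_up (n := n) (a := a) (b := b - 1) (c := b - k + 1) (d := b - 1)
          ha (by omega) (by omega) le_rfl
        rw [show b - k + 1 - 1 = b - k from by omega, show b - 1 - 1 = b - 2 from by omega] at h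
        exact h
      have s3 : down n (b - 1) a * σ n b = σ n (b - 1) * σ n b * down n (b - 2) a := by
        have hc : Commute (σ n b) (down n (b - 2) a) :=
          down_commute ha (fun j hj1 hj2 => (σ_comm_all (by omega)).symm)
        calc down n (b - 1) a * σ n b
            = σ n (b - 1) * (down n (b - 2) a * σ n b) := by rw [hsplit2]; group
          _ = σ n (b - 1) * (σ n b * down n (b - 2) a) := by rw [← hc.eq]
          _ = σ n (b - 1) * σ n b * down n (b - 2) a := by group
      calc down n (b - 1) a * up n (b - k + 1) b
          = (down n (b - 1) a * up n (b - k + 1) (b - 1)) * σ n b := by rw [s1]; group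
        _ = (up n (b - k) (b - 2) * down n (b - 1) a) * σ n b := by rw [s2]
        _ = up n (b - k) (b - 2) * (down n (b - 1) a * σ n b) := by group
        _ = up n (b - k) (b - 2) * (σ n (b - 1) * σ n b * down n (b - 2) a) := by rw [s3]
    have hcb : Commute (σ n b) (up n (b - k) (b - 2)) :=
      up_commute (by omega) (fun j hj1 hj2 => (σ_comm_all (by omega)).symm)
    have hbr : σ n b * (σ n (b - 1) * σ n b) = σ n (b - 1) * σ n b * σ n (b - 1) := by
      have h := σ_braid (n := n) (i := b - 1) (by omega) (by omega)
      rw [show b - 1 + 1 = b from by omega] at h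
      rw [← mul_assoc, ← h]
    have e8 : up n (b - k) b = up n (b - k) (b - 2) * (σ n (b - 1) * σ n b) := by
      have h := up_split (n := n) (a := b - k) (b := b) (c := b - 2)
        (show b - k ≤ b - 2 + 1 from by omega) (show b - 2 ≤ b from by omega)
      rw [show b - 2 + 1 = b - 1 from by omega] at h
      rw [h, up_cons (show b - 1 ≤ b from by omega), show b - 1 + 1 = b from by omega, up_single]
    calc down n b a ^ (k + 1)
        = down n b a * down n b a ^ k := by rw [pow_succ']
      _ = (σ n b * down n (b - 1) a) * (up n (b - k + 1) b * down n (b - 1) a ^ k) := by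
          rw [ih', down_top ha hab]
      _ = σ n b * (down n (b - 1) a * up n (b - k + 1) b) * down n (b - 1) a ^ k := by group
      _ = σ n b * (up n (b - k) (b - 2) * (σ n (b - 1) * σ n b * down n (b - 2) a))
            * down n (b - 1) a ^ k := by rw [e1]
      _ = (σ n b * up n (b - k) (b - 2))
            * ((σ n (b - 1) * σ n b * down n (b - 2) a) * down n (b - 1) a ^ k) := by group
      _ = (up n (b - k) (b - 2) * σ n b)
            * ((σ n (b - 1) * σ n b * down n (b - 2) a) * down n (b - 1) a ^ k) := by
          rw [hcb.eq]
      _ = up n (b - k) (b - 2)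
            * ((σ n b * (σ n (b - 1) * σ n b)) * (down n (b - 2) a * down n (b - 1) a ^ k)) := by
          group
      _ = up n (b - k) (b - 2)
            * ((σ n (b - 1) * σ n b * σ n (b - 1)) * (down n (b - 2) a * down n (b - 1) a ^ k)) := by
          rw [hbr]
      _ = (up n (b - k) (b - 2) * (σ n (b - 1) * σ n b))
            * ((σ n (b - 1) * down n (b - 2) a) * down n (b - 1) a ^ k) := by group
      _ = up n (b - k) b * (down n (b - 1) a * down n (b - 1) a ^ k) := by
          rw [← e8, ← hsplit2]
      _ = up n (b - (k + 1) + 1) b * down n (b - 1) a ^ (k + 1) := by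
          rw [show b - (k + 1) + 1 = b - k from by omega, ← pow_succ']

end Lemmas2

section Lemmas3

variable {n : ℕ}

lemma lemW : ∀ b : ℕ, 1 ≤ b → b ≤ n - 1 →
    σ n b * (down n (b - 1) 1 * down n b 1) = down n (b - 1) 1 * down n b 1 * σ n 1 := by
  intro b hb1
  induction b, hb1 using Nat.le_induction with
  | base =>
    intro _
    rw [show (1 : ℕ) - 1 = 0 from rfl, down_eq_one (show (0:ℕ) < 1 from by omega), down_single]
    group
  | succ b hb ih =>
    intro hb2
    have ih' := ih (by omega)
    have e1 : down n (b + 1) 1 = σ n (b + 1) * down n b 1 := by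
      rw [down_top (by omega) (by omega), show b + 1 - 1 = b from by omega]
    have e2 : down n b 1 = σ n b * down n (b - 1) 1 := down_top (by omega) (by omega)
    have hc : Commute (σ n (b + 1)) (down n (b - 1) 1) :=
      down_commute (by omega) (fun j hj1 hj2 => σ_comm_all (by omega) |>.symm)
    have hbr := σ_braid (n := n) (i := b) (by omega) (by omega)
    rw [show b + 1 - 1 = b from by omega]
    calc σ n (b + 1) * (down n b 1 * down n (b + 1) 1)
        = σ n (b + 1) * (down n b 1 * (σ n (b + 1) * down n b 1)) := by rw [e1]
      _ = σ n (b + 1) * ((σ n b * down n (b - 1) 1) * (σ n (b + 1) * down n b 1)) := by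
          nth_rewrite 1 [e2]
          rfl
      _ = (σ n (b + 1) * σ n b) * ((down n (b - 1) 1 * σ n (b + 1)) * down n b 1) := by group
      _ = (σ n (b + 1) * σ n b) * ((σ n (b + 1) * down n (b - 1) 1) * down n b 1) := by
          rw [← hc.eq]
      _ = (σ n (b + 1) * σ n b * σ n (b + 1)) * (down n (b - 1) 1 * down n b 1) := by group
      _ = (σ n b * σ n (b + 1) * σ n b) * (down n (b - 1) 1 * down n b 1) := by rw [← hbr]
      _ = (σ n b * σ n (b + 1)) * (σ n b * (down n (b - 1) 1 * down n b 1)) := by group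
      _ = (σ n b * σ n (b + 1)) * (down n (b - 1) 1 * down n b 1 * σ n 1) := by rw [ih']
      _ = (σ n b * (down n (b - 1) 1 * σ n (b + 1))) * down n b 1 * σ n 1 := by
          rw [← hc.eq]; group
      _ = (σ n b * down n (b - 1) 1) * (σ n (b + 1) * down n b 1) * σ n 1 := by group
      _ = down n b 1 * down n (b + 1) 1 * σ n 1 := by rw [← e2, ← e1]

lemma shift_pow (t : ℕ) : ∀ i : ℕ, 1 ≤ i → i + t ≤ n - 1 →
    σ n i * down n (n - 1) 1 ^ t = down n (n - 1) 1 ^ t * σ n (i + t) := by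
  induction t with
  | zero => intro i h1 h2; simp
  | succ t ih =>
    intro i h1 h2
    have hδ : σ n i * down n (n - 1) 1 = down n (n - 1) 1 * σ n (i + 1) :=
      shift_down' (by omega) (by omega) (by omega) le_rfl
    calc σ n i * down n (n - 1) 1 ^ (t + 1)
        = (σ n i * down n (n - 1) 1) * down n (n - 1) 1 ^ t := by rw [pow_succ']; group
      _ = down n (n - 1) 1 * (σ n (i + 1) * down n (n - 1) 1 ^ t) := by rw [hδ]; group
      _ = down n (n - 1) 1 * (down n (n - 1) 1 ^ t * σ n (i + 1 + t)) := by
          rw [ih (i + 1) (by omega) (by omega)]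
      _ = down n (n - 1) 1 ^ (t + 1) * σ n (i + (t + 1)) := by
          rw [show i + 1 + t = i + (t + 1) from by omega, pow_succ']; group

lemma fullTwist_comm_σ (hn : 2 ≤ n) (j : ℕ) : Commute (fullTwist n) (σ n j) := by
  by_cases hj : 1 ≤ j ∧ j ≤ n - 1
  · obtain ⟨hj1, hj2⟩ := hj
    have wrap : σ n (n - 1) * down n (n - 1) 1 ^ 2 = down n (n - 1) 1 ^ 2 * σ n 1 := by
      have hW := lemW (n - 1) (by omega) le_rfl
      have e1 : down n (n - 1) 1 = σ n (n - 1) * down n (n - 1 - 1) 1 :=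
        down_top (by omega) (by omega)
      calc σ n (n - 1) * down n (n - 1) 1 ^ 2
          = σ n (n - 1) * ((σ n (n - 1) * down n (n - 1 - 1) 1) * down n (n - 1) 1) := by
            rw [pow_two]; nth_rewrite 1 [e1]
            rfl
      -- occurrences of `down n (n-1) 1` in goal after pow_two: LHS has two, RHS (target) has one
        _ = (σ n (n - 1) * σ n (n - 1)) * (down n (n - 1 - 1) 1 * down n (n - 1) 1) := by group
        _ = σ n (n - 1) * (σ n (n - 1) * (down n (n - 1 - 1) 1 * down n (n - 1) 1)) := by group
        _ = σ n (n - 1) * (down n (n - 1 - 1) 1 * down n (n - 1) 1 * σ n 1) := by rw [hW]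
        _ = ((σ n (n - 1) * down n (n - 1 - 1) 1) * down n (n - 1) 1) * σ n 1 := by group
        _ = down n (n - 1) 1 ^ 2 * σ n 1 := by rw [← e1, pow_two]
    have h1 : σ n j * down n (n - 1) 1 ^ (n - 1 - j)
        = down n (n - 1) 1 ^ (n - 1 - j) * σ n (n - 1) := by
      have h := shift_pow (n := n) (n - 1 - j) j hj1 (by omega)
      rw [show j + (n - 1 - j) = n - 1 from by omega] at h
      exact h
    have h2 : σ n 1 * down n (n - 1) 1 ^ (j - 1) = down n (n - 1) 1 ^ (j - 1) * σ n j := by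
      have h := shift_pow (n := n) (j - 1) 1 le_rfl (by omega)
      rw [show 1 + (j - 1) = j from by omega] at h
      exact h
    have hsum : down n (n - 1) 1 ^ (n - 1 - j) * (down n (n - 1) 1 ^ 2 * down n (n - 1) 1 ^ (j - 1))
        = down n (n - 1) 1 ^ n := by
      rw [← pow_add, ← pow_add, show n - 1 - j + (2 + (j - 1)) = n from by omega]
    have final : σ n j * down n (n - 1) 1 ^ n = down n (n - 1) 1 ^ n * σ n j := by
      calc σ n j * down n (n - 1) 1 ^ n
          = σ n j * (down n (n - 1) 1 ^ (n - 1 - j)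
              * (down n (n - 1) 1 ^ 2 * down n (n - 1) 1 ^ (j - 1))) := by rw [hsum]
        _ = (σ n j * down n (n - 1) 1 ^ (n - 1 - j))
              * (down n (n - 1) 1 ^ 2 * down n (n - 1) 1 ^ (j - 1)) := by group
        _ = (down n (n - 1) 1 ^ (n - 1 - j) * σ n (n - 1))
              * (down n (n - 1) 1 ^ 2 * down n (n - 1) 1 ^ (j - 1)) := by rw [h1]
        _ = down n (n - 1) 1 ^ (n - 1 - j)
              * ((σ n (n - 1) * down n (n - 1) 1 ^ 2) * down n (n - 1) 1 ^ (j - 1)) := by group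
        _ = down n (n - 1) 1 ^ (n - 1 - j)
              * ((down n (n - 1) 1 ^ 2 * σ n 1) * down n (n - 1) 1 ^ (j - 1)) := by rw [wrap]
        _ = down n (n - 1) 1 ^ (n - 1 - j)
              * (down n (n - 1) 1 ^ 2 * (σ n 1 * down n (n - 1) 1 ^ (j - 1))) := by group
        _ = down n (n - 1) 1 ^ (n - 1 - j)
              * (down n (n - 1) 1 ^ 2 * (down n (n - 1) 1 ^ (j - 1) * σ n j)) := by rw [h2]
        _ = (down n (n - 1) 1 ^ (n - 1 - j)
              * (down n (n - 1) 1 ^ 2 * down n (n - 1) 1 ^ (j - 1))) * σ n j := by group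
        _ = down n (n - 1) 1 ^ n * σ n j := by rw [hsum]
    exact (show Commute (σ n j) (fullTwist n) from final).symm
  · rw [σ_eq_one hj]; exact Commute.one_right _

lemma fullTwist_central (hn : 2 ≤ n) (x : BraidGroup n) : Commute (fullTwist n) x := by
  have hx : x ∈ Subgroup.centralizer {fullTwist n} := by
    apply PresentedGroup.generated_by
    intro j
    erw [Subgroup.mem_centralizer_iff]
    intro g hg
    erw [Set.mem_singleton_iff] at hg
    subst hg
    have e : σ n (j.val + 1) = PresentedGroup.of j := by
      erw [σ, dif_pos ⟨by omega, by have := j.isLt; omega⟩]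
      exact congrArg PresentedGroup.of (Fin.ext (by simp))
    rw [← e]
    exact (fullTwist_comm_σ hn (j.val + 1)).eq
  exact Subgroup.mem_centralizer_iff.mp hx _ (Set.mem_singleton _)

end Lemmas3

section Lemmas4

variable {n : ℕ}

lemma flipsDown_succ (k : ℕ) : flipsDown n (k + 1) 1 = flip n (k + 1) * flipsDown n k 1 := by
  unfold flipsDown
  rw [show k + 1 + 1 - 1 = k + 1 from by omega, show k + 1 - 1 = k from by omega,
    List.range'_1_concat, List.reverse_append, show 1 + k = k + 1 from by omega]
  simp

lemma stepA {k : ℕ} (hk1 : 1 ≤ k) (hk2 : k ≤ n - 1) :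
    (down n (k - 1) 1 ^ (-(k : ℤ)) * down n (n - 1) (k + 1) ^ (n - k)) * flip n k
      = down n (k - 1 - 1) 1 ^ (-((k : ℤ) - 1)) * down n (n - 1) k ^ (n - k + 1) := by
  have hUL : Commute (down n (n - 1) (k + 1)) (down n (k - 1) 1) :=
    down_commute le_rfl (fun j hj1 hj2 =>
      ((down_commute (show 1 ≤ k + 1 from by omega)
        (fun i hi1 hi2 => σ_comm_all (by omega)) : Commute (σ n j) (down n (n - 1) (k + 1))).symm))
  have hUA1 : Commute (down n (n - 1) (k + 1)) (up n 1 (k - 1)) :=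
    up_commute le_rfl (fun j hj1 hj2 =>
      ((down_commute (show 1 ≤ k + 1 from by omega)
        (fun i hi1 hi2 => σ_comm_all (by omega)) : Commute (σ n j) (down n (n - 1) (k + 1))).symm))
  have hsplitA : up n 1 (n - 1) = up n 1 (k - 1) * up n k (n - 1) := by
    have h := up_split (n := n) (a := 1) (b := n - 1) (c := k - 1) (by omega) (by omega)
    rw [show k - 1 + 1 = k from by omega] at h
    exact h
  have hpB : down n (n - 1) k ^ (n - k) = down n (n - 1) (k + 1) ^ (n - k) * up n k (n - 1) := by
    have h := powB (n := n) (a := k) (b := n - 1) (k := n - k) hk1 hk2 le_rfl (by omega) (by omega)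
    rw [show k + (n - k) - 1 = n - 1 from by omega] at h
    exact h
  have hLA1 : down n (k - 1) 1 ^ (-(k : ℤ) + 1) * up n 1 (k - 1)
      = down n (k - 1 - 1) 1 ^ (-((k : ℤ) - 1)) := by
    rcases eq_or_lt_of_le hk1 with rfl | hk
    · have e0 : down n (1 - 1) 1 = (1 : BraidGroup n) := down_eq_one (by norm_num)
      have e1 : up n 1 (1 - 1) = (1 : BraidGroup n) := up_eq_one (by norm_num)
      rw [e0, e1]
      simp
    · have hpC := powC (n := n) (a := 1) (b := k - 1) (k := k - 1) le_rfl (by omega) (by omega)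
        (by omega) (by omega)
      rw [show k - 1 - (k - 1) + 1 = 1 from by omega] at hpC
      have h2 : up n 1 (k - 1)
          = down n (k - 1) 1 ^ (k - 1) * (down n (k - 1 - 1) 1 ^ (k - 1))⁻¹ := by
        rw [hpC]; group
      rw [h2, show (-(k : ℤ) + 1) = -((k : ℤ) - 1) from by ring,
        ← zpow_natCast (down n (k - 1) 1) (k - 1), ← zpow_natCast (down n (k - 1 - 1) 1) (k - 1),
        show ((k - 1 : ℕ) : ℤ) = (k : ℤ) - 1 from by omega]
      group
  calc (down n (k - 1) 1 ^ (-(k : ℤ)) * down n (n - 1) (k + 1) ^ (n - k)) * flip n k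
      = down n (k - 1) 1 ^ (-(k : ℤ)) * (down n (n - 1) (k + 1) ^ (n - k) * down n (k - 1) 1)
          * (up n 1 (n - 1) * down n (n - 1) k) := by
        simp only [flip]; group
    _ = down n (k - 1) 1 ^ (-(k : ℤ)) * (down n (k - 1) 1 * down n (n - 1) (k + 1) ^ (n - k))
          * (up n 1 (n - 1) * down n (n - 1) k) := by
        rw [(hUL.pow_left (n - k)).eq]
    _ = (down n (k - 1) 1 ^ (-(k : ℤ)) * down n (k - 1) 1)
          * (down n (n - 1) (k + 1) ^ (n - k)
            * ((up n 1 (k - 1) * up n k (n - 1)) * down n (n - 1) k)) := by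
        rw [hsplitA]; group
    _ = down n (k - 1) 1 ^ (-(k : ℤ) + 1)
          * ((down n (n - 1) (k + 1) ^ (n - k) * up n 1 (k - 1))
            * (up n k (n - 1) * down n (n - 1) k)) := by
        rw [← zpow_add_one]; group
    _ = down n (k - 1) 1 ^ (-(k : ℤ) + 1)
          * (up n 1 (k - 1) * ((down n (n - 1) (k + 1) ^ (n - k) * up n k (n - 1))
            * down n (n - 1) k)) := by
        rw [(hUA1.pow_left (n - k)).eq]; group
    _ = (down n (k - 1) 1 ^ (-(k : ℤ) + 1) * up n 1 (k - 1))
          * (down n (n - 1) k ^ (n - k) * down n (n - 1) k) := by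
        rw [← hpB]; group
    _ = down n (k - 1 - 1) 1 ^ (-((k : ℤ) - 1)) * down n (n - 1) k ^ (n - k + 1) := by
        rw [hLA1, ← pow_succ]

end Lemmas4

/-- For `1 ≤ k ≤ n-1`, the element
`b_k = (σ_{k-1} ⋯ σ_2 σ_1)^{-k} (σ_{n-1} ⋯ σ_{k+2} σ_{k+1})^{n-k}` of `B_n` satisfies
`b_k = d (r_k r_{k-1} ⋯ r_1)⁻¹ = (r_k r_{k-1} ⋯ r_1)⁻¹ d`. -/
theorem bk_eq_fullTwist_mul_inv_flips (n : ℕ) (hn : 2 ≤ n) (k : ℕ) (hk1 : 1 ≤ k)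
    (hk2 : k ≤ n - 1) :
    down n (k - 1) 1 ^ (-(k : ℤ)) * down n (n - 1) (k + 1) ^ (n - k)
      = fullTwist n * (flipsDown n k 1)⁻¹ ∧
    down n (k - 1) 1 ^ (-(k : ℤ)) * down n (n - 1) (k + 1) ^ (n - k)
      = (flipsDown n k 1)⁻¹ * fullTwist n := by
  have key : ∀ m : ℕ, m ≤ n - 1 →
      down n (m - 1) 1 ^ (-(m : ℤ)) * down n (n - 1) (m + 1) ^ (n - m)
        = fullTwist n * (flipsDown n m 1)⁻¹ := by
    intro m
    induction m with
    | zero =>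
      intro _
      have e0 : down n (0 - 1) 1 = (1 : BraidGroup n) := down_eq_one (by norm_num)
      have e1 : flipsDown n 0 1 = (1 : BraidGroup n) := rfl
      rw [e0, e1]
      simp [fullTwist]
    | succ m ih =>
      intro hm1
      have ihh := ih (by omega)
      have hstep := stepA (n := n) (k := m + 1) (by omega) hm1
      have hB : down n (m + 1 - 1 - 1) 1 ^ (-(((m + 1 : ℕ) : ℤ) - 1))
          * down n (n - 1) (m + 1) ^ (n - (m + 1) + 1)
          = fullTwist n * (flipsDown n m 1)⁻¹ := by
        rw [show m + 1 - 1 - 1 = m - 1 from by omega,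
          show n - (m + 1) + 1 = n - m from by omega,
          show -(((m + 1 : ℕ) : ℤ) - 1) = -(m : ℤ) from by push_cast; ring]
        exact ihh
      rw [hB] at hstep
      rw [flipsDown_succ, mul_inv_rev, ← mul_assoc, ← hstep]
      group
  constructor
  · exact key k hk2
  · rw [key k hk2]
    exact (fullTwist_central hn ((flipsDown n k 1)⁻¹)).eq


end Braid
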